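/- For every radial function f in H^1(ℝ²) with r^{λ-1}∂_r f ∈ L²(ℝ²) for λ ∈ {1,2}, there exists a constant C such that for all r > 0: r^λ |f(r)|² ≤ C(‖r^{λ-1}∂_r f‖²_{L²} + ‖f‖²_{L²}). -/

import Mathlib

open MeasureTheory Set

lemma key_trunc (F : ℝ → ℝ) (hF0 : ∀ s, 0 ≤ F s)
    (hInt : Integrable (fun x : EuclideanSpace ℝ (Fin 2) => F ‖x‖))
    (r R : ℝ) (hr : 0 < r) :
    2 * (volume (Metric.ball (0 : EuclideanSpace ℝ (Fin 2)) 1)).toReal *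
      ∫ y in Ioc r R, y * F y ≤ ∫ x : EuclideanSpace ℝ (Fin 2), F ‖x‖ := by
  have h1 := integral_fun_norm_addHaar (volume : Measure (EuclideanSpace ℝ (Fin 2)))
    ((Ioc r R).indicator F)
  rw [finrank_euclideanSpace_fin] at h1
  have hR : ∫ y in Ioi (0:ℝ), y ^ (2 - 1) • (Ioc r R).indicator F y
      = ∫ y in Ioc r R, y * F y := by
    have : ∀ y : ℝ, y ^ (2-1) • (Ioc r R).indicator F y
        = (Ioc r R).indicator (fun y => y * F y) y := by
      intro y
      simp only [pow_one, smul_eq_mul, indicator]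
      split_ifs <;> simp
    simp_rw [this]
    rw [setIntegral_indicator measurableSet_Ioc]
    congr 1
    rw [inter_eq_right.2]
    exact fun y hy => lt_trans hr hy.1
  have hL : (fun x : EuclideanSpace ℝ (Fin 2) => (Ioc r R).indicator F ‖x‖)
      = ((fun x : EuclideanSpace ℝ (Fin 2) => ‖x‖) ⁻¹' (Ioc r R)).indicator
          (fun x => F ‖x‖) := by
    funext x
    simp only [indicator, mem_preimage]
    split_ifs <;> rfl
  rw [hR, hL, integral_indicator ((measurableSet_Ioc).preimage (by fun_prop))] at h1
  have h2 : ∫ x in (fun x : EuclideanSpace ℝ (Fin 2) => ‖x‖) ⁻¹' (Ioc r R), F ‖x‖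
      ≤ ∫ x : EuclideanSpace ℝ (Fin 2), F ‖x‖ :=
    setIntegral_le_integral hInt (Filter.Eventually.of_forall fun x => hF0 _)
  calc 2 * (volume (Metric.ball (0 : EuclideanSpace ℝ (Fin 2)) 1)).toReal *
        ∫ y in Ioc r R, y * F y
      = ∫ x in (fun x : EuclideanSpace ℝ (Fin 2) => ‖x‖) ⁻¹' (Ioc r R), F ‖x‖ := by
        rw [h1, nsmul_eq_mul, smul_eq_mul, measureReal_def]; push_cast; ring
    _ ≤ _ := h2

theorem radial_weighted_decay :
    ∃ C : ℝ, 0 < C ∧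
      ∀ (g : ℝ → ℝ) (l : ℕ), (l = 1 ∨ l = 2) →
        ContDiff ℝ 1 g →
        Integrable (fun x : EuclideanSpace ℝ (Fin 2) => (g ‖x‖) ^ 2) →
        Integrable (fun x : EuclideanSpace ℝ (Fin 2) => (‖x‖ ^ (l - 1) * deriv g ‖x‖) ^ 2) →
        ∀ r : ℝ, 0 < r →
          r ^ l * (g r) ^ 2 ≤
            C * ((∫ x : EuclideanSpace ℝ (Fin 2), (‖x‖ ^ (l - 1) * deriv g ‖x‖) ^ 2) +
                 ∫ x : EuclideanSpace ℝ (Fin 2), (g ‖x‖) ^ 2) := by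
  classical
  set c : ℝ := 2 * (volume (Metric.ball (0 : EuclideanSpace ℝ (Fin 2)) 1)).toReal with hc
  have hc0 : 0 < c := by
    have h1 : (0:ENNReal) < volume (Metric.ball (0 : EuclideanSpace ℝ (Fin 2)) 1) :=
      Metric.measure_ball_pos _ _ one_pos
    have h2 : volume (Metric.ball (0 : EuclideanSpace ℝ (Fin 2)) 1) < ⊤ := measure_ball_lt_top
    have := ENNReal.toReal_pos h1.ne' h2.ne
    positivity
  refine ⟨1/c, by positivity, ?_⟩
  intro g l hl hg hIg hId r hr
  have hl1 : 1 ≤ l := by rcases hl with h | h <;> omega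
  have hl2 : l ≤ 2 := by rcases hl with h | h <;> omega
  set Id : ℝ := ∫ x : EuclideanSpace ℝ (Fin 2), (‖x‖ ^ (l - 1) * deriv g ‖x‖) ^ 2 with hIdd
  set Ig : ℝ := ∫ x : EuclideanSpace ℝ (Fin 2), (g ‖x‖) ^ 2 with hIgd
  set ψ : ℝ → ℝ := fun s => (g s) ^ 2 with hψ
  set φ : ℝ → ℝ := fun s => (s ^ (l-1) * deriv g s) ^ 2 with hφ
  have hgc : Continuous g := hg.continuous
  have hdc : Continuous (deriv g) := hg.continuous_deriv le_rfl
  have hψc : Continuous ψ := hgc.pow 2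
  have hφc : Continuous φ := ((continuous_pow (l-1)).mul hdc).pow 2
  -- truncated integral bounds
  have keyψ : ∀ a T : ℝ, 0 < a → ∫ y in Ioc a T, y * ψ y ≤ Ig / c := by
    intro a T ha
    have h := key_trunc ψ (fun s => sq_nonneg _) hIg a T ha
    have heq : (∫ x : EuclideanSpace ℝ (Fin 2), ψ ‖x‖) = Ig := rfl
    rw [heq, ← hc] at h
    rw [le_div_iff₀ hc0]
    linarith
  have keyφ : ∀ a T : ℝ, 0 < a → ∫ y in Ioc a T, y * φ y ≤ Id / c := by
    intro a T ha
    have h := key_trunc φ (fun s => sq_nonneg _) hId a T ha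
    have heq : (∫ x : EuclideanSpace ℝ (Fin 2), φ ‖x‖) = Id := rfl
    rw [heq, ← hc] at h
    rw [le_div_iff₀ hc0]
    linarith
  have hIg0 : 0 ≤ Ig := integral_nonneg fun x => sq_nonneg _
  have hId0 : 0 ≤ Id := integral_nonneg fun x => sq_nonneg _
  -- derivative of s ↦ s^l * g s ^ 2
  set D : ℝ → ℝ := fun s => (l:ℝ) * s ^ (l-1) * g s ^ 2 + s ^ l * (2 * g s * deriv g s)
    with hD
  have hgd : ∀ s : ℝ, HasDerivAt g (deriv g s) s := fun s =>
    ((hg.differentiable one_ne_zero) s).hasDerivAt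
  have hder : ∀ s : ℝ, HasDerivAt (fun t => t ^ l * g t ^ 2) (D s) s := by
    intro s
    have h1 := hasDerivAt_pow l s
    have h2 := (hgd s).pow 2
    have := h1.mul h2
    exact this.congr_deriv (by simp [hD])
  have hDc : Continuous D := by fun_prop
  -- pointwise lower bound on D
  have hpt : ∀ s : ℝ, 0 < s → -(s * ψ s + s * φ s) ≤ D s := by
    intro s hs
    have hsl : s ^ l = s ^ (l-1) * s := by
      rw [← pow_succ]; congr 1; omega
    have hfirst : 0 ≤ (l:ℝ) * s ^ (l-1) * g s ^ 2 := by positivity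
    have hsq : 0 ≤ s * (g s + s ^ (l-1) * deriv g s) ^ 2 :=
      mul_nonneg hs.le (sq_nonneg _)
    simp only [hD, hψ, hφ]
    rw [hsl]
    nlinarith [hsq, hfirst]
  -- main FTC estimate
  have main : ∀ R : ℝ, r ≤ R →
      r ^ l * g r ^ 2 ≤ R ^ l * g R ^ 2 + (Id / c + Ig / c) := by
    intro R hrR
    have hDint : IntervalIntegrable D volume r R := hDc.intervalIntegrable _ _
    have hftc : ∫ s in r..R, D s = R ^ l * g R ^ 2 - r ^ l * g r ^ 2 :=
      intervalIntegral.integral_eq_sub_of_hasDerivAt (fun s _ => hder s) hDint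
    set G : ℝ → ℝ := fun s => s * ψ s + s * φ s with hG
    have hGc : Continuous G := by fun_prop
    have hmono : ∫ s in r..R, (-D) s ≤ ∫ s in r..R, G s := by
      apply intervalIntegral.integral_mono_on hrR hDint.neg (hGc.intervalIntegrable _ _)
      intro s hs
      have hs0 : 0 < s := lt_of_lt_of_le hr hs.1
      have := hpt s hs0
      simp only [Pi.neg_apply, hG]
      linarith
    have hneg : ∫ s in r..R, (-D) s = -(R ^ l * g R ^ 2 - r ^ l * g r ^ 2) := by
      simp only [Pi.neg_apply]
      rw [intervalIntegral.integral_neg, hftc]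
    have hGsplit : ∫ s in r..R, G s ≤ Id / c + Ig / c := by
      rw [intervalIntegral.integral_of_le hrR]
      have h1 : IntegrableOn (fun y => y * ψ y) (Ioc r R) :=
        (Continuous.integrableOn_Ioc (by fun_prop))
      have h2 : IntegrableOn (fun y => y * φ y) (Ioc r R) :=
        (Continuous.integrableOn_Ioc (by fun_prop))
      have : ∫ s in Ioc r R, G s
          = (∫ s in Ioc r R, s * ψ s) + ∫ s in Ioc r R, s * φ s :=
        integral_add h1 h2
      rw [this]
      have := keyψ r R hr
      have := keyφ r R hr
      linarith
    rw [hneg] at hmono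
    linarith
  -- decay along a sequence
  have claim : ∀ ε : ℝ, 0 < ε → ∃ R : ℝ, max r 1 < R ∧ R ^ l * g R ^ 2 < ε := by
    intro ε hε
    by_contra hcon
    push_neg at hcon
    set a : ℝ := max r 1 with ha
    have ha1 : 1 ≤ a := le_max_right r 1
    have ha0 : 0 < a := lt_of_lt_of_le one_pos ha1
    set T : ℝ := a * Real.exp ((Ig / c + 1) / ε) with hT
    have hexp : 1 < Real.exp ((Ig / c + 1) / ε) := by
      rw [Real.one_lt_exp_iff]
      positivity
    have haT : a < T := by
      have := mul_lt_mul_of_pos_left hexp ha0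
      simpa [hT] using this
    have hlow : ∀ y ∈ Ioc a T, ε * y⁻¹ ≤ y * ψ y := by
      intro y hy
      have hy1 : 1 ≤ y := le_trans ha1 hy.1.le
      have hy0 : 0 < y := lt_of_lt_of_le one_pos hy1
      have h1 : ε ≤ y ^ l * g y ^ 2 := hcon y hy.1
      have h2 : y ^ l ≤ y ^ 2 := pow_le_pow_right₀ hy1 hl2
      have h3 : ε ≤ y ^ 2 * g y ^ 2 :=
        le_trans h1 (mul_le_mul_of_nonneg_right h2 (sq_nonneg _))
      have h4 : ε * y⁻¹ ≤ (y ^ 2 * g y ^ 2) * y⁻¹ :=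
        mul_le_mul_of_nonneg_right h3 (by positivity)
      calc ε * y⁻¹ ≤ (y ^ 2 * g y ^ 2) * y⁻¹ := h4
        _ = y * ψ y := by field_simp [hψ]; ring
    have hintinv : IntegrableOn (fun y => ε * y⁻¹) (Ioc a T) := by
      have : IntervalIntegrable (fun y : ℝ => ε * y⁻¹) volume a T := by
        apply IntervalIntegrable.const_mul
        apply intervalIntegral.intervalIntegrable_inv
        · intro x hx
          have : a ≤ x := by
            rcases Set.mem_uIcc.1 hx with h | h
            · exact h.1
            · linarith [h.1, haT.le]
          linarith
        · fun_prop
      exact (intervalIntegrable_iff_integrableOn_Ioc_of_le haT.le).1 this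
    have hmono2 : ∫ y in Ioc a T, ε * y⁻¹ ≤ ∫ y in Ioc a T, y * ψ y := by
      apply setIntegral_mono_on hintinv (Continuous.integrableOn_Ioc (by fun_prop))
        measurableSet_Ioc hlow
    have hval : ∫ y in Ioc a T, ε * y⁻¹ = ε * Real.log (T / a) := by
      rw [← intervalIntegral.integral_of_le haT.le,
        intervalIntegral.integral_const_mul, integral_inv]
      intro hx
      rcases Set.mem_uIcc.1 hx with h | h
      · linarith [h.1]
      · linarith [h.1, haT.le]
    have hlog : Real.log (T / a) = (Ig / c + 1) / ε := by
      rw [hT, mul_comm, mul_div_assoc, div_self ha0.ne', mul_one, Real.log_exp]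
    have : Ig / c + 1 ≤ Ig / c := by
      have h5 := le_trans (le_of_eq hval.symm) (le_trans hmono2 (keyψ a T ha0))
      rw [hlog, mul_div_cancel₀ _ hε.ne'] at h5
      exact h5
    linarith
  -- conclude
  have final : r ^ l * g r ^ 2 ≤ Id / c + Ig / c := by
    apply le_of_forall_pos_le_add
    intro ε hε
    obtain ⟨R, hR1, hR2⟩ := claim ε hε
    have hrR : r ≤ R := le_trans (le_max_left r 1) hR1.le
    have := main R hrR
    linarith
  have : 1 / c * (Id + Ig) = Id / c + Ig / c := by ring
  linarith
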